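/- Let D be a symmetric n×n real matrix with 0 ⪯ D ⪯ (1/(1-τρ))·I, where τ > 0, ρ ≥ 0 and τρ < 1. Then D can be written as D = Π_{R(D)} (I + τA)^{-1} Π_{R(D)}, where Π_{R(D)} is the orthogonal projection onto the range of D, and A is a symmetric matrix satisfying A + ρI ⪰ 0 and range(A) ⊆ range(D). -/

import Mathlib

open Matrix

/-- Conjugation of a diagonal matrix by `U`. -/
noncomputable def stmt0conj {n : ℕ} (U : Matrix (Fin n) (Fin n) ℝ) (f : Fin n → ℝ) :
    Matrix (Fin n) (Fin n) ℝ :=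
  U * Matrix.diagonal f * star U

lemma stmt0conj_mul {n : ℕ} (U : Matrix (Fin n) (Fin n) ℝ) (hUU : star U * U = 1)
    (f g : Fin n → ℝ) : stmt0conj U f * stmt0conj U g = stmt0conj U (f * g) := by
  unfold stmt0conj
  have hdd : Matrix.diagonal f * Matrix.diagonal g = Matrix.diagonal (f * g) := by
    rw [Matrix.diagonal_mul_diagonal]; rfl
  simp only [Matrix.mul_assoc]
  rw [← Matrix.mul_assoc (star U) U, hUU, Matrix.one_mul,
    ← Matrix.mul_assoc (Matrix.diagonal f), hdd]

lemma stmt0conj_const {n : ℕ} (U : Matrix (Fin n) (Fin n) ℝ) (hUU' : U * star U = 1)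
    (c : ℝ) : stmt0conj U (fun _ => c) = c • 1 := by
  unfold stmt0conj
  rw [← Matrix.smul_one_eq_diagonal, Matrix.mul_smul, Matrix.mul_one, Matrix.smul_mul, hUU']

lemma stmt0conj_add {n : ℕ} (U : Matrix (Fin n) (Fin n) ℝ) (f g : Fin n → ℝ) :
    stmt0conj U (f + g) = stmt0conj U f + stmt0conj U g := by
  unfold stmt0conj
  have hdd : Matrix.diagonal (f + g) = Matrix.diagonal f + Matrix.diagonal g := by
    rw [Matrix.diagonal_add]; rfl
  rw [hdd, Matrix.mul_add, Matrix.add_mul]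

lemma stmt0conj_smul {n : ℕ} (U : Matrix (Fin n) (Fin n) ℝ) (c : ℝ) (f : Fin n → ℝ) :
    stmt0conj U (c • f) = c • stmt0conj U f := by
  unfold stmt0conj
  rw [Matrix.diagonal_smul, Matrix.mul_smul, Matrix.smul_mul]

lemma stmt0conj_isSymm {n : ℕ} (U : Matrix (Fin n) (Fin n) ℝ) (f : Fin n → ℝ) :
    (stmt0conj U f).IsSymm := by
  unfold Matrix.IsSymm
  rw [← Matrix.conjTranspose_eq_transpose_of_trivial]
  unfold stmt0conj
  simp [Matrix.conjTranspose_mul, Matrix.diagonal_conjTranspose,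
    Matrix.star_eq_conjTranspose, Matrix.mul_assoc]

lemma stmt0conj_posSemidef {n : ℕ} (U : Matrix (Fin n) (Fin n) ℝ) (f : Fin n → ℝ)
    (hf : ∀ i, 0 ≤ f i) : (stmt0conj U f).PosSemidef := by
  have h := (Matrix.posSemidef_diagonal_iff.mpr hf).mul_mul_conjTranspose_same U
  simpa [stmt0conj, Matrix.star_eq_conjTranspose] using h

lemma stmt0conj_unconj {n : ℕ} (U : Matrix (Fin n) (Fin n) ℝ) (hUU : star U * U = 1)
    (f : Fin n → ℝ) : star U * stmt0conj U f * U = Matrix.diagonal f := by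
  unfold stmt0conj
  rw [← Matrix.mul_assoc, ← Matrix.mul_assoc, hUU, Matrix.one_mul, Matrix.mul_assoc, hUU,
    Matrix.mul_one]

/-- A symmetric matrix `D` with `0 ⪯ D ⪯ (1/(1-τρ))·I` can be written as
`D = P (I + τA)⁻¹ P` where `P` is the orthogonal projection onto the range of `D`
and `A` is symmetric with `A + ρI ⪰ 0` and `range(A) ⊆ range(D)`. -/
theorem stmt_0 {n : ℕ} (τ ρ : ℝ) (hτ : 0 < τ) (hρ : 0 ≤ ρ) (hτρ : τ * ρ < 1)
    (D : Matrix (Fin n) (Fin n) ℝ) (hDsymm : D.IsSymm)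
    (hD0 : D.PosSemidef)
    (hD1 : ((1 / (1 - τ * ρ)) • (1 : Matrix (Fin n) (Fin n) ℝ) - D).PosSemidef) :
    ∃ A P : Matrix (Fin n) (Fin n) ℝ,
      A.IsSymm ∧ (A + ρ • (1 : Matrix (Fin n) (Fin n) ℝ)).PosSemidef ∧
      LinearMap.range A.mulVecLin ≤ LinearMap.range D.mulVecLin ∧
      P.IsSymm ∧ P * P = P ∧
      LinearMap.range P.mulVecLin = LinearMap.range D.mulVecLin ∧
      D = P * ((1 : Matrix (Fin n) (Fin n) ℝ) + τ • A)⁻¹ * P := by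
  have h1 : (0:ℝ) < 1 - τ * ρ := by linarith
  have hH : D.IsHermitian := hD0.1
  set U : Matrix (Fin n) (Fin n) ℝ := (hH.eigenvectorUnitary : Matrix (Fin n) (Fin n) ℝ)
    with hUdef
  have hUU : star U * U = 1 := Matrix.mem_unitaryGroup_iff'.mp hH.eigenvectorUnitary.2
  have hUU' : U * star U = 1 := Matrix.mem_unitaryGroup_iff.mp hH.eigenvectorUnitary.2
  set d : Fin n → ℝ := hH.eigenvalues with hd
  have hspec : D = stmt0conj U d := by
    have := hH.spectral_theorem
    simpa [stmt0conj] using this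
  -- eigenvalue bounds
  have hdiag : (Matrix.diagonal d).PosSemidef := by
    have h := hD0.conjTranspose_mul_mul_same U
    rw [← Matrix.star_eq_conjTranspose, hspec, stmt0conj_unconj U hUU] at h
    exact h
  have hd0 : ∀ i, 0 ≤ d i := Matrix.posSemidef_diagonal_iff.mp hdiag
  have hdiag1 : (Matrix.diagonal (fun i => 1 / (1 - τ * ρ) - d i)).PosSemidef := by
    have h := hD1.conjTranspose_mul_mul_same U
    rw [← Matrix.star_eq_conjTranspose] at h
    have e : (1 / (1 - τ * ρ)) • (1 : Matrix (Fin n) (Fin n) ℝ) - D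
        = stmt0conj U (fun i => 1 / (1 - τ * ρ) - d i) := by
      have e1 : (fun i => 1 / (1 - τ * ρ) - d i)
          = (fun _ : Fin n => 1 / (1 - τ * ρ)) + ((-1 : ℝ) • d) := by
        funext j; simp [sub_eq_add_neg]
      rw [e1, stmt0conj_add, stmt0conj_const U hUU', stmt0conj_smul, hspec,
        neg_one_smul, ← sub_eq_add_neg]
    rw [e, stmt0conj_unconj U hUU] at h
    exact h
  have hd1 : ∀ i, d i ≤ 1 / (1 - τ * ρ) := by
    intro i
    have := Matrix.posSemidef_diagonal_iff.mp hdiag1 i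
    linarith
  -- the data
  set a : Fin n → ℝ := fun i => if d i = 0 then 0 else ((d i)⁻¹ - 1) / τ with ha
  set p : Fin n → ℝ := fun i => if d i = 0 then 0 else 1 with hp
  have hτ0 : τ ≠ 0 := ne_of_gt hτ
  refine ⟨stmt0conj U a, stmt0conj U p, stmt0conj_isSymm U a, ?_, ?_,
    stmt0conj_isSymm U p, ?_, ?_, ?_⟩
  · -- A + ρ • 1 PSD
    have e : stmt0conj U a + ρ • (1 : Matrix (Fin n) (Fin n) ℝ)
        = stmt0conj U (a + fun _ => ρ) := by
      rw [stmt0conj_add, stmt0conj_const U hUU']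
    rw [e]
    apply stmt0conj_posSemidef
    intro i
    simp only [Pi.add_apply, ha]
    by_cases hdi : d i = 0
    · simpa [hdi] using hρ
    · have hdi0 : 0 < d i := lt_of_le_of_ne (hd0 i) (Ne.symm hdi)
      have hmul : d i * (1 - τ * ρ) ≤ 1 := by
        have := hd1 i
        rw [le_div_iff₀ h1] at this
        linarith
      have hinv : 0 ≤ (d i)⁻¹ - 1 + τ * ρ := by
        have hdd : d i * (d i)⁻¹ = 1 := mul_inv_cancel₀ hdi
        nlinarith [mul_pos hdi0 (show (0:ℝ) < (d i)⁻¹ from inv_pos.mpr hdi0)]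
      have heq : ((d i)⁻¹ - 1) / τ + ρ = ((d i)⁻¹ - 1 + τ * ρ) / τ := by
        field_simp
      rw [if_neg hdi, heq]
      exact div_nonneg hinv (le_of_lt hτ)
  · -- range A ≤ range D
    have hfun : (d * fun i => if d i = 0 then 0 else ((d i)⁻¹ - 1) / τ * (d i)⁻¹) = a := by
      funext j
      by_cases hdj : d j = 0
      · simp [ha, hdj]
      · simp only [Pi.mul_apply, ha, if_neg hdj]
        rw [mul_comm, mul_assoc, inv_mul_cancel₀ hdj, mul_one]
    have e : stmt0conj U a
        = D * stmt0conj U (fun i => if d i = 0 then 0 else ((d i)⁻¹ - 1) / τ * (d i)⁻¹) := by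
      rw [hspec, stmt0conj_mul U hUU, hfun]
    rw [e, Matrix.mulVecLin_mul]
    exact LinearMap.range_comp_le_range _ _
  · -- P * P = P
    have hfun : p * p = p := by
      funext j
      by_cases hdj : d j = 0 <;> simp [hp, hdj]
    rw [stmt0conj_mul U hUU, hfun]
  · -- range P = range D
    apply le_antisymm
    · have hfun : (d * fun i => if d i = 0 then 0 else (d i)⁻¹) = p := by
        funext j
        by_cases hdj : d j = 0
        · simp [hp, hdj]
        · simp only [Pi.mul_apply, hp, if_neg hdj]
          exact mul_inv_cancel₀ hdj
      have e : stmt0conj U p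
          = D * stmt0conj U (fun i => if d i = 0 then 0 else (d i)⁻¹) := by
        rw [hspec, stmt0conj_mul U hUU, hfun]
      rw [e, Matrix.mulVecLin_mul]
      exact LinearMap.range_comp_le_range _ _
    · have hfun : p * d = d := by
        funext j
        by_cases hdj : d j = 0 <;> simp [hp, hdj]
      have e : D = stmt0conj U p * D := by
        conv_lhs => rw [hspec]
        rw [hspec, stmt0conj_mul U hUU, hfun]
      conv_lhs => rw [e]
      rw [Matrix.mulVecLin_mul]
      exact LinearMap.range_comp_le_range _ _
  · -- the decomposition
    have hfun1 : ((fun _ : Fin n => (1:ℝ)) + τ • a)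
        = fun i => if d i = 0 then 1 else (d i)⁻¹ := by
      funext j
      by_cases hdj : d j = 0
      · simp [ha, hdj]
      · simp only [Pi.add_apply, Pi.smul_apply, ha, if_neg hdj, smul_eq_mul]
        field_simp
        ring
    have hA1 : (1 : Matrix (Fin n) (Fin n) ℝ) + τ • stmt0conj U a
        = stmt0conj U (fun i => if d i = 0 then 1 else (d i)⁻¹) := by
      rw [← stmt0conj_smul, ← one_smul ℝ (1 : Matrix (Fin n) (Fin n) ℝ),
        ← stmt0conj_const U hUU' 1, ← stmt0conj_add, hfun1]
    have hinv : ((1 : Matrix (Fin n) (Fin n) ℝ) + τ • stmt0conj U a)⁻¹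
        = stmt0conj U (fun i => if d i = 0 then 1 else d i) := by
      apply Matrix.inv_eq_right_inv
      rw [hA1, stmt0conj_mul U hUU]
      have e : ((fun i => if d i = 0 then 1 else (d i)⁻¹)
          * fun i => if d i = 0 then 1 else d i) = fun _ : Fin n => (1:ℝ) := by
        funext j
        by_cases hdj : d j = 0 <;> simp [hdj, inv_mul_cancel₀]
      rw [e, stmt0conj_const U hUU', one_smul]
    have hfun2 : ((p * fun i => if d i = 0 then 1 else d i) * p) = d := by
      funext j
      by_cases hdj : d j = 0 <;> simp [hp, hdj]
    rw [hinv, stmt0conj_mul U hUU, stmt0conj_mul U hUU, hfun2, hspec]
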